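/- Define γ : (ℝ²)³ → ℝ³ by γ(a₁, a₂, a₃) = (‖a₂ − a₃‖, ‖a₃ − a₁‖, ‖a₁ − a₂‖). Then there is no constant C₁ > 0 such that C₁ · d_{E(2)}(A,B) ≤ d(γ(A), γ(B)) for all triples A, B of points in ℝ²; that is, the side-lengths map γ is not bi-Lipschitz with respect to the orbit distance d_{E(2)}. -/

import Mathlib

open Matrix
open scoped ComplexOrder

/-- Frobenius norm of a real matrix: `‖A‖ = √(trace (A Aᵀ))`. -/
noncomputable def frobR {n l : ℕ} (A : Matrix (Fin n) (Fin l) ℝ) : ℝ :=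
  Real.sqrt (Matrix.trace (A * Aᵀ))

/-- Frobenius norm of a complex matrix: `‖A‖ = √(trace (A Aᴴ))`. -/
noncomputable def frobC {n l : ℕ} (A : Matrix (Fin n) (Fin l) ℂ) : ℝ :=
  Real.sqrt (Matrix.trace (A * Aᴴ)).re

open Classical in
/-- The unique positive semidefinite square root of a positive semidefinite real
symmetric matrix (junk value `0` if `M` is not positive semidefinite). -/
noncomputable def matSqrtR {k : ℕ} (M : Matrix (Fin k) (Fin k) ℝ) : Matrix (Fin k) (Fin k) ℝ :=
  if h : M.PosSemidef then (h.1.eigenvectorUnitary : Matrix (Fin k) (Fin k) ℝ) *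
    Matrix.diagonal (fun i => Real.sqrt (h.1.eigenvalues i)) *
    (star h.1.eigenvectorUnitary : Matrix (Fin k) (Fin k) ℝ) else 0

open Classical in
/-- The unique positive semidefinite square root of a positive semidefinite hermitian
matrix (junk value `0` if `M` is not positive semidefinite). -/
noncomputable def matSqrtC {k : ℕ} (M : Matrix (Fin k) (Fin k) ℂ) : Matrix (Fin k) (Fin k) ℂ :=
  if h : M.PosSemidef then (h.1.eigenvectorUnitary : Matrix (Fin k) (Fin k) ℂ) *
    Matrix.diagonal (fun i => ((Real.sqrt (h.1.eigenvalues i) : ℝ) : ℂ)) *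
    (star h.1.eigenvectorUnitary : Matrix (Fin k) (Fin k) ℂ) else 0

/-- Orbit distance for the orthogonal group `O(n)` acting by left multiplication. -/
noncomputable def dO {n l : ℕ} (A B : Matrix (Fin n) (Fin l) ℝ) : ℝ :=
  sInf {x | ∃ W ∈ Matrix.orthogonalGroup (Fin n) ℝ, x = frobR (W * A - B)}

/-- Orbit distance for the unitary group `U(n)` acting by left multiplication. -/
noncomputable def dU {n l : ℕ} (A B : Matrix (Fin n) (Fin l) ℂ) : ℝ :=
  sInf {x | ∃ W ∈ Matrix.unitaryGroup (Fin n) ℂ, x = frobC (W * A - B)}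

/-- `q𝟙ᵀ` : the `n × l` matrix each of whose columns equals `q` (real case). -/
def colMatR {n l : ℕ} (q : Fin n → ℝ) : Matrix (Fin n) (Fin l) ℝ :=
  Matrix.of fun i _ => q i

/-- `q𝟙ᵀ` : the `n × l` matrix each of whose columns equals `q` (complex case). -/
def colMatC {n l : ℕ} (q : Fin n → ℂ) : Matrix (Fin n) (Fin l) ℂ :=
  Matrix.of fun i _ => q i

/-- Orbit distance for the euclidean group `E(n) = O(n) ⋉ ℝⁿ` acting columnwise. -/
noncomputable def dE {n l : ℕ} (A B : Matrix (Fin n) (Fin l) ℝ) : ℝ :=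
  sInf {x | ∃ P ∈ Matrix.orthogonalGroup (Fin n) ℝ, ∃ q : Fin n → ℝ,
    x = frobR (P * A + colMatR q - B)}

/-- Orbit distance for the complex euclidean group `F(n) = U(n) ⋉ ℂⁿ` acting columnwise. -/
noncomputable def dF {n l : ℕ} (A B : Matrix (Fin n) (Fin l) ℂ) : ℝ :=
  sInf {x | ∃ P ∈ Matrix.unitaryGroup (Fin n) ℂ, ∃ q : Fin n → ℂ,
    x = frobC (P * A + colMatC q - B)}

/-- Column-centering `π` : subtract from each column the average of all columns (real case). -/
noncomputable def centerR {n l : ℕ} (A : Matrix (Fin n) (Fin l) ℝ) : Matrix (Fin n) (Fin l) ℝ :=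
  Matrix.of fun i j => A i j - (∑ k, A i k) / (l : ℝ)

/-- Column-centering `π_ℂ` : subtract from each column the average of all columns (complex case). -/
noncomputable def centerC {n l : ℕ} (A : Matrix (Fin n) (Fin l) ℂ) : Matrix (Fin n) (Fin l) ℂ :=
  Matrix.of fun i j => A i j - (∑ k, A i k) / (l : ℂ)

/-- Euclidean norm of a vector in `ℝⁿ`. -/
noncomputable def eunorm {n : ℕ} (v : Fin n → ℝ) : ℝ := Real.sqrt (∑ i, v i ^ 2)

/-- The side-lengths map `γ(a₁,a₂,a₃) = (‖a₂−a₃‖, ‖a₃−a₁‖, ‖a₁−a₂‖)`. -/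
noncomputable def gammaMap (a : Fin 3 → Fin 2 → ℝ) : Fin 3 → ℝ :=
  ![eunorm (a 1 - a 2), eunorm (a 2 - a 0), eunorm (a 0 - a 1)]

/-- Identify a triple of points in `ℝ²` with a `2×3` matrix whose columns are the points. -/
def toMat (a : Fin 3 → Fin 2 → ℝ) : Matrix (Fin 2) (Fin 3) ℝ :=
  Matrix.of fun i j => a j i


section Aux19

private lemma frob_entry_le {D : Matrix (Fin 2) (Fin 3) ℝ} (i : Fin 2) (j : Fin 3) :
    |D i j| ≤ frobR D := by
  have ht : Matrix.trace (D * Dᵀ) = ∑ i, ∑ j, D i j ^ 2 := by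
    simp [Matrix.trace, Matrix.mul_apply, Matrix.diag, sq]
  have h1 : D i j ^ 2 ≤ Matrix.trace (D * Dᵀ) := by
    rw [ht]
    have h2 : D i j ^ 2 ≤ ∑ j' : Fin 3, D i j' ^ 2 :=
      Finset.single_le_sum (f := fun j' => D i j' ^ 2)
        (fun k _ => sq_nonneg (D i k)) (Finset.mem_univ j)
    refine h2.trans ?_
    exact Finset.single_le_sum (f := fun i' : Fin 2 => ∑ j' : Fin 3, D i' j' ^ 2)
      (fun k _ => Finset.sum_nonneg fun m _ => sq_nonneg _) (Finset.mem_univ i)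
  calc |D i j| = Real.sqrt (D i j ^ 2) := (Real.sqrt_sq_eq_abs _).symm
  _ ≤ frobR D := Real.sqrt_le_sqrt h1

private lemma ortho_det_sq {P : Matrix (Fin 2) (Fin 2) ℝ}
    (h : P ∈ Matrix.orthogonalGroup (Fin 2) ℝ) :
    (P 0 0 * P 1 1 - P 0 1 * P 1 0) ^ 2 = 1 := by
  rw [Matrix.mem_orthogonalGroup_iff'] at h
  have h00 := congrFun (congrFun h 0) 0
  have h01 := congrFun (congrFun h 0) 1
  have h11 := congrFun (congrFun h 1) 1
  simp [Matrix.mul_apply, Fin.sum_univ_succ, Matrix.one_apply] at h00 h01 h11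
  nlinarith [h00, h01, h11]

private lemma dE_lower (e : ℝ) (he0 : 0 < e) (he1 : e ≤ 1) :
    e / 7 ≤ dE (toMat ![![(-1:ℝ),0], ![1,0], ![0,e]]) (toMat ![![(-1:ℝ),0], ![1,0], ![0,0]]) := by
  apply le_csInf
  · exact ⟨frobR ((1 : Matrix (Fin 2) (Fin 2) ℝ) * toMat ![![(-1:ℝ),0], ![1,0], ![0,e]] +
      colMatR 0 - toMat ![![(-1:ℝ),0], ![1,0], ![0,0]]), 1, one_mem _, 0, rfl⟩
  · rintro x ⟨P, hP, q, rfl⟩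
    set D := P * toMat ![![(-1:ℝ),0], ![1,0], ![0,e]] + colMatR q -
      toMat ![![(-1:ℝ),0], ![1,0], ![0,0]] with hD
    set r := frobR D with hr
    have hr0 : 0 ≤ r := Real.sqrt_nonneg _
    have hent : ∀ i j, -r ≤ D i j ∧ D i j ≤ r := by
      intro i j
      have := frob_entry_le (D := D) i j
      rw [← hr] at this
      exact abs_le.mp this
    have hdet := ortho_det_sq hP
    have hkey : (D 0 1 - D 0 0 + 2) * (D 1 2 - D 1 0) - (D 0 2 - D 0 0 + 1) * (D 1 1 - D 1 0)
        = 2*e*(P 0 0 * P 1 1 - P 0 1 * P 1 0) := by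
      rw [hD]
      simp [Matrix.sub_apply, Matrix.add_apply, Matrix.mul_apply, toMat, colMatR,
        Fin.sum_univ_succ, Matrix.vecHead, Matrix.vecTail]
      ring
    obtain ⟨b00l, b00r⟩ := hent 0 0
    obtain ⟨b01l, b01r⟩ := hent 0 1
    obtain ⟨b02l, b02r⟩ := hent 0 2
    obtain ⟨b10l, b10r⟩ := hent 1 0
    obtain ⟨b11l, b11r⟩ := hent 1 1
    obtain ⟨b12l, b12r⟩ := hent 1 2
    have habs1 : |D 0 1 - D 0 0 + 2| ≤ 2 + 2*r := abs_le.mpr ⟨by linarith, by linarith⟩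
    have habs2 : |D 1 2 - D 1 0| ≤ 2*r := abs_le.mpr ⟨by linarith, by linarith⟩
    have habs3 : |D 0 2 - D 0 0 + 1| ≤ 1 + 2*r := abs_le.mpr ⟨by linarith, by linarith⟩
    have habs4 : |D 1 1 - D 1 0| ≤ 2*r := abs_le.mpr ⟨by linarith, by linarith⟩
    have hdet1 : |P 0 0 * P 1 1 - P 0 1 * P 1 0| = 1 := by
      rw [← Real.sqrt_sq_eq_abs, hdet, Real.sqrt_one]
    have hbd : 2*e ≤ (2 + 2*r)*(2*r) + (1 + 2*r)*(2*r) := by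
      have e1 : |2*e*(P 0 0 * P 1 1 - P 0 1 * P 1 0)| = 2*e := by
        rw [abs_mul, hdet1, mul_one, abs_of_nonneg (by linarith)]
      calc 2*e = |(D 0 1 - D 0 0 + 2) * (D 1 2 - D 1 0)
            - (D 0 2 - D 0 0 + 1) * (D 1 1 - D 1 0)| := by rw [hkey, e1]
      _ ≤ |(D 0 1 - D 0 0 + 2) * (D 1 2 - D 1 0)|
            + |(D 0 2 - D 0 0 + 1) * (D 1 1 - D 1 0)| := abs_sub _ _
      _ = |D 0 1 - D 0 0 + 2| * |D 1 2 - D 1 0|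
            + |D 0 2 - D 0 0 + 1| * |D 1 1 - D 1 0| := by rw [abs_mul, abs_mul]
      _ ≤ (2 + 2*r)*(2*r) + (1 + 2*r)*(2*r) := by
            gcongr <;> first | exact abs_nonneg _ | positivity
    rcases le_or_gt r 1 with hcase | hcase
    · nlinarith
    · nlinarith

private lemma gamma_upper (e : ℝ) :
    eunorm (gammaMap ![![(-1:ℝ),0], ![1,0], ![0,e]]
      - gammaMap ![![(-1:ℝ),0], ![1,0], ![0,0]]) ≤ e^2 := by
  have sqrt4 : Real.sqrt 4 = 2 := by
    rw [show (4:ℝ) = 2^2 by norm_num]; exact Real.sqrt_sq (by norm_num)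
  have g0 : gammaMap ![![(-1:ℝ),0], ![1,0], ![0,e]]
      = ![Real.sqrt (1+e^2), Real.sqrt (1+e^2), 2] := by
    funext i
    fin_cases i
    · simp [gammaMap, eunorm, Fin.sum_univ_succ]
    · simp [gammaMap, eunorm, Fin.sum_univ_succ]
    · simp [gammaMap, eunorm, Fin.sum_univ_succ]; norm_num [sqrt4]
  have g1 : gammaMap ![![(-1:ℝ),0], ![1,0], ![0,0]] = ![1, 1, 2] := by
    funext i
    fin_cases i
    · simp [gammaMap, eunorm, Fin.sum_univ_succ]
    · simp [gammaMap, eunorm, Fin.sum_univ_succ]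
    · simp [gammaMap, eunorm, Fin.sum_univ_succ]; norm_num [sqrt4]
  rw [g0, g1]
  have hs1 : (1:ℝ) ≤ Real.sqrt (1+e^2) := by
    nlinarith [Real.sq_sqrt (show (0:ℝ) ≤ 1+e^2 by positivity), Real.sqrt_nonneg (1+e^2)]
  have hs2 : Real.sqrt (1+e^2) ≤ 1 + e^2/2 := by
    rw [show (1+e^2/2 : ℝ) = Real.sqrt ((1+e^2/2)^2) from (Real.sqrt_sq (by positivity)).symm]
    exact Real.sqrt_le_sqrt (by nlinarith)
  set s := Real.sqrt (1+e^2) with hs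
  have hv : eunorm (![s,s,2] - ![1,1,2]) = Real.sqrt ((s-1)^2 + (s-1)^2) := by
    simp [eunorm, Fin.sum_univ_succ]
  rw [hv]
  rw [show e^2 = Real.sqrt ((e^2)^2) from (Real.sqrt_sq (by positivity)).symm]
  exact Real.sqrt_le_sqrt (by nlinarith)

end Aux19

/-- The side-lengths map of triangles admits no lower Lipschitz bound for the orbit
distance `d_{E(2)}`: it is not bi-Lipschitz. -/
theorem stmt19 :
    ¬ ∃ C₁ : ℝ, 0 < C₁ ∧ ∀ a b : Fin 3 → Fin 2 → ℝ,
      C₁ * dE (toMat a) (toMat b) ≤ eunorm (gammaMap a - gammaMap b) := by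
  rintro ⟨C, hC, h⟩
  set e : ℝ := min 1 (C/14) with he_def
  have he0 : 0 < e := lt_min one_pos (by positivity)
  have he1 : e ≤ 1 := min_le_left _ _
  have heC : e ≤ C/14 := min_le_right _ _
  have hdE := dE_lower e he0 he1
  have hg := gamma_upper e
  have hchain := h ![![(-1:ℝ),0], ![1,0], ![0,e]] ![![(-1:ℝ),0], ![1,0], ![0,0]]
  have hmul : C * (e/7) ≤ C * dE (toMat ![![(-1:ℝ),0], ![1,0], ![0,e]])
      (toMat ![![(-1:ℝ),0], ![1,0], ![0,0]]) :=
    mul_le_mul_of_nonneg_left hdE hC.le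
  nlinarith [mul_pos hC he0]
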